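/- Let t₀ < t₁ be real numbers, let f : [t₀, t₁) → [0, ∞) be a nonnegative function, and let g : [t₀, t₁) → [0, ∞) be a continuous nonnegative function. Let A ≥ 1 and 0 < θ, δ < 1, and assume that f(t) ≤ g(t) ≤ g(t₀) + δ(A² + f(t)²)(f(t) + θ) for all t ∈ [t₀, t₁). Assume furthermore that g(t₀) + δA²θ ≤ 1 and δ(A² + 6) ≤ 1/4. Then f(t) ≤ g(t) ≤ 2(g(t₀) + δA²θ) for all t ∈ [t₀, t₁). -/
import Mathlib


/-- **Continuity (bootstrap) argument** (Lemma 4.3): note that no continuity of `f` is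
assumed — only the continuous majorant `g` is used to close the bootstrap. -/
theorem continuity_argument (t₀ t₁ : ℝ) (h01 : t₀ < t₁)
    (f g : ℝ → ℝ)
    (hf_nonneg : ∀ t ∈ Set.Ico t₀ t₁, 0 ≤ f t)
    (hg_nonneg : ∀ t ∈ Set.Ico t₀ t₁, 0 ≤ g t)
    (hg_cont : ContinuousOn g (Set.Ico t₀ t₁))
    (A θ δ : ℝ) (hA : 1 ≤ A) (hθ0 : 0 < θ) (hθ1 : θ < 1) (hδ0 : 0 < δ) (hδ1 : δ < 1)
    (hmain : ∀ t ∈ Set.Ico t₀ t₁,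
      f t ≤ g t ∧ g t ≤ g t₀ + δ * (A ^ 2 + f t ^ 2) * (f t + θ))
    (hpar₁ : g t₀ + δ * A ^ 2 * θ ≤ 1)
    (hpar₂ : δ * (A ^ 2 + 6) ≤ 1 / 4) :
    ∀ t ∈ Set.Ico t₀ t₁, f t ≤ g t ∧ g t ≤ 2 * (g t₀ + δ * A ^ 2 * θ) := by
  set B : ℝ := g t₀ + δ * A ^ 2 * θ with hB
  have ht₀ : t₀ ∈ Set.Ico t₀ t₁ := ⟨le_refl _, h01⟩
  have hgt₀ : 0 ≤ g t₀ := hg_nonneg t₀ ht₀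
  have hBpos : 0 < B := by
    have : 0 < δ * A ^ 2 * θ := by positivity
    linarith
  have hB1 : B ≤ 1 := hpar₁
  -- bootstrap improvement
  have key : ∀ t ∈ Set.Ico t₀ t₁, g t ≤ 2 * B → g t ≤ 3 / 2 * B := by
    intro t ht hle
    obtain ⟨h1, h2⟩ := hmain t ht
    have hf0 : 0 ≤ f t := hf_nonneg t ht
    have hf2B : f t ≤ 2 * B := h1.trans hle
    have hf2 : f t ≤ 2 := by linarith
    nlinarith [mul_pos hδ0 (mul_pos (pow_pos (lt_of_lt_of_le one_pos hA) 2) hθ0),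
      mul_nonneg (mul_nonneg hδ0.le hf0) hf0, sq_nonneg (f t),
      mul_nonneg hδ0.le hf0,
      mul_le_mul_of_nonneg_left hf2B (mul_nonneg hδ0.le (sq_nonneg A)),
      mul_nonneg (mul_nonneg hδ0.le (sq_nonneg (f t))) (by linarith : (0:ℝ) ≤ f t + θ)]
  -- open sets
  obtain ⟨U, hUopen, hU⟩ := (continuousOn_iff'.mp hg_cont) (Set.Iio (2 * B)) isOpen_Iio
  obtain ⟨V, hVopen, hV⟩ := (continuousOn_iff'.mp hg_cont) (Set.Ioi (3 / 2 * B)) isOpen_Ioi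
  have hall : ∀ t ∈ Set.Ico t₀ t₁, g t < 2 * B := by
    by_contra hcon
    push_neg at hcon
    obtain ⟨s, hs, hsge⟩ := hcon
    have hcover : Set.Ico t₀ t₁ ⊆ U ∪ V := by
      intro t ht
      rcases le_or_gt (g t) (2 * B) with h | h
      · have h' := key t ht h
        have : t ∈ g ⁻¹' Set.Iio (2 * B) ∩ Set.Ico t₀ t₁ := ⟨by simpa using by linarith, ht⟩
        rw [hU] at this
        exact Or.inl this.1
      · have : t ∈ g ⁻¹' Set.Ioi (3 / 2 * B) ∩ Set.Ico t₀ t₁ :=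
          ⟨by simp only [Set.mem_preimage, Set.mem_Ioi]; linarith, ht⟩
        rw [hV] at this
        exact Or.inr this.1
    have hUne : (Set.Ico t₀ t₁ ∩ U).Nonempty := by
      refine ⟨t₀, ht₀, ?_⟩
      have : t₀ ∈ g ⁻¹' Set.Iio (2 * B) ∩ Set.Ico t₀ t₁ := by
        refine ⟨?_, ht₀⟩
        simp only [Set.mem_preimage, Set.mem_Iio]
        have hpos : 0 < δ * A ^ 2 * θ := by positivity
        linarith
      rw [hU] at this
      exact this.1
    have hVne : (Set.Ico t₀ t₁ ∩ V).Nonempty := by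
      refine ⟨s, hs, ?_⟩
      have : s ∈ g ⁻¹' Set.Ioi (3 / 2 * B) ∩ Set.Ico t₀ t₁ := by
        refine ⟨?_, hs⟩
        simp only [Set.mem_preimage, Set.mem_Ioi]
        linarith
      rw [hV] at this
      exact this.1
    obtain ⟨x, hx, hxU, hxV⟩ := isPreconnected_Ico U V hUopen hVopen hcover hUne hVne
    have hxU' : x ∈ g ⁻¹' Set.Iio (2 * B) ∩ Set.Ico t₀ t₁ := by
      rw [hU]; exact ⟨hxU, hx⟩
    have hxV' : x ∈ g ⁻¹' Set.Ioi (3 / 2 * B) ∩ Set.Ico t₀ t₁ := by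
      rw [hV]; exact ⟨hxV, hx⟩
    have h1 : g x < 2 * B := hxU'.1
    have h2 : 3 / 2 * B < g x := hxV'.1
    have := key x hx h1.le
    linarith
  intro t ht
  exact ⟨(hmain t ht).1, (hall t ht).le⟩
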